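/- Let k ≥ 1 and for 1 ≤ i ≤ k let f_i, g_i ∈ ℂ[z] be polynomials with f_i(0) ≠ 0 and deg g_i < deg f_i, and suppose the rational functions g_1/f_1, …, g_k/f_k are linearly independent over ℂ. Regarding each g_i(z)/f_i(z) as an element of ℂ[[z]] ⊂ ℂ((z)) (inverting f_i, which is possible since f_i(0) ≠ 0), the ℂ-linear span of {z^{−(k−1)} g_i(z)/f_i(z) : 1 ≤ i ≤ k} ∪ {z^{−i} : i ≥ k} is a point of the Sato Grassmannian UGM. -/

import Mathlib

set_option synthInstance.maxHeartbeats 1000000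
set_option maxHeartbeats 1000000

noncomputable section

/- Shortcut instances to speed up instance search for submodules of `ℂ((z))`. -/
instance (U : Submodule ℂ (LaurentSeries ℂ)) : AddCommGroup U := inferInstance
instance (U : Submodule ℂ (LaurentSeries ℂ)) : Module ℂ U := inferInstance

/-- The variable `z` in the field of formal Laurent series `ℂ((z))`. -/
def zL : LaurentSeries ℂ := HahnSeries.single 1 1

/-- Truncation: keep only the coefficients of nonpositive powers of `z`.
This is the projection onto `V_φ = ℂ[z⁻¹]` along `V₀ = zℂ[[z]]`. -/
def trunc : LaurentSeries ℂ →ₗ[ℂ] LaurentSeries ℂ where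
  toFun f :=
    { coeff := fun n => if n ≤ 0 then f.coeff n else 0
      isPWO_support' := f.isPWO_support.mono (by
        intro n hn
        simp only [Function.mem_support] at hn ⊢
        intro h
        apply hn
        simp [h]) }
  map_add' f g := by
    ext n
    by_cases h : n ≤ 0 <;> simp [HahnSeries.coeff_add, h]
  map_smul' c f := by
    ext n
    by_cases h : n ≤ 0 <;> simp [HahnSeries.coeff_smul, h]

/-- `V_φ = ℂ[z⁻¹]`, realized as the range of the truncation map. -/
def Vphi : Submodule ℂ (LaurentSeries ℂ) := LinearMap.range trunc

/-- The projection `π : ℂ((z)) → V_φ` restricted to a subspace `U`. -/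
def projU (U : Submodule ℂ (LaurentSeries ℂ)) : U →ₗ[ℂ] Vphi :=
  trunc.rangeRestrict.comp U.subtype

/-- The Sato Grassmannian: subspaces `U ⊆ ℂ((z))` such that the kernel and the
cokernel of `π|_U : U → V_φ` are finite dimensional of the same dimension. -/
def UGM : Set (Submodule ℂ (LaurentSeries ℂ)) :=
  {U | FiniteDimensional ℂ (LinearMap.ker (projU U)) ∧
       FiniteDimensional ℂ (Vphi ⧸ LinearMap.range (projU U)) ∧
       Module.finrank ℂ (LinearMap.ker (projU U)) =
         Module.finrank ℂ (Vphi ⧸ LinearMap.range (projU U))}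

/-- A polynomial regarded as an element of `ℂ((z))` (via `ℂ[[z]]`). -/
def polyToL (p : Polynomial ℂ) : LaurentSeries ℂ :=
  HahnSeries.ofPowerSeries ℤ ℂ (p : PowerSeries ℂ)

/-! ### Auxiliary lemmas -/

lemma trunc_coeff (x : LaurentSeries ℂ) (n : ℤ) :
    (trunc x).coeff n = if n ≤ 0 then x.coeff n else 0 := rfl

lemma zL_pow (n : ℕ) : zL ^ n = HahnSeries.single (n : ℤ) 1 := by
  induction n with
  | zero => simp [HahnSeries.single_zero_one]
  | succ m ih =>
      rw [pow_succ, ih, zL, HahnSeries.single_mul_single]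
      norm_num

lemma zL_zpow (n : ℤ) : zL ^ n = HahnSeries.single n 1 := by
  cases n with
  | ofNat m => simpa using zL_pow m
  | negSucc m =>
      have h1 : zL ^ ((m+1 : ℕ) : ℤ) = HahnSeries.single ((m+1 : ℕ) : ℤ) 1 := by
        rw [zpow_natCast]; exact zL_pow (m+1)
      have h2 : (Int.negSucc m) = -((m+1 : ℕ) : ℤ) := by simp [Int.negSucc_eq]
      rw [h2, zpow_neg, h1]
      refine inv_eq_of_mul_eq_one_right ?_
      rw [HahnSeries.single_mul_single]
      have h3 : ((m+1 : ℕ) : ℤ) + -((m+1 : ℕ) : ℤ) = 0 := by omega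
      rw [h3, mul_one, HahnSeries.single_zero_one]

lemma ofPowerSeries_coeff_neg (p : PowerSeries ℂ) (n : ℤ) (hn : n < 0) :
    (HahnSeries.ofPowerSeries ℤ ℂ p).coeff n = 0 := by
  rw [HahnSeries.ofPowerSeries_apply, HahnSeries.embDomain_notin_range]
  rintro ⟨m, hm⟩
  have hm : ((m : ℕ) : ℤ) = n := hm
  omega

lemma polyToL_ne_zero {f : Polynomial ℂ} (hf : f.eval 0 ≠ 0) : polyToL f ≠ 0 := by
  intro h
  have h0 : HahnSeries.ofPowerSeries ℤ ℂ (f : PowerSeries ℂ) = HahnSeries.ofPowerSeries ℤ ℂ 0 := by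
    simpa [polyToL] using h
  have : (f : PowerSeries ℂ) = 0 := HahnSeries.ofPowerSeries_injective h0
  rw [Polynomial.coe_eq_zero_iff] at this
  simp [this] at hf

lemma div_eq_ofPowerSeries (f g : Polynomial ℂ) (hf : f.eval 0 ≠ 0) :
    polyToL g / polyToL f =
      HahnSeries.ofPowerSeries ℤ ℂ ((g : PowerSeries ℂ) * (f : PowerSeries ℂ)⁻¹) := by
  have hc : PowerSeries.constantCoeff (f : PowerSeries ℂ) ≠ 0 := by
    rw [Polynomial.constantCoeff_coe, Polynomial.coeff_zero_eq_eval_zero]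
    exact hf
  rw [div_eq_iff (polyToL_ne_zero hf), polyToL, polyToL, ← map_mul]
  congr 1
  rw [mul_assoc, PowerSeries.inv_mul_cancel _ hc, mul_one]

lemma div_coeff_neg (f g : Polynomial ℂ) (hf : f.eval 0 ≠ 0) (n : ℤ) (hn : n < 0) :
    (polyToL g / polyToL f).coeff n = 0 := by
  rw [div_eq_ofPowerSeries f g hf]
  exact ofPowerSeries_coeff_neg _ n hn

lemma trunc_eq_self (x : LaurentSeries ℂ) (h : ∀ n, 0 < n → x.coeff n = 0) :
    trunc x = x := by
  ext n
  rw [trunc_coeff]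
  split_ifs with hn
  · rfl
  · exact (h n (by omega)).symm

lemma trunc_trunc (x : LaurentSeries ℂ) : trunc (trunc x) = trunc x := by
  apply trunc_eq_self
  intro n hn
  rw [trunc_coeff, if_neg (by omega)]

lemma mem_Vphi_iff (x : LaurentSeries ℂ) : x ∈ Vphi ↔ trunc x = x := by
  constructor
  · rintro ⟨y, rfl⟩; exact trunc_trunc y
  · intro h; exact ⟨x, h⟩

lemma mem_Vphi_coeff_pos {x : LaurentSeries ℂ} (hx : x ∈ Vphi) {n : ℤ} (hn : 0 < n) :
    x.coeff n = 0 := by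
  rw [mem_Vphi_iff] at hx
  rw [← hx, trunc_coeff, if_neg (by omega)]

lemma support_finite_of_mem_Vphi {x : LaurentSeries ℂ} (hx : x ∈ Vphi) :
    x.support.Finite := by
  rcases eq_or_ne x 0 with rfl | h0
  · simp [HahnSeries.support_zero]
  · apply Set.Finite.subset (Set.finite_Icc x.order 0)
    intro n hn
    simp only [HahnSeries.mem_support] at hn
    constructor
    · exact HahnSeries.order_le_of_coeff_ne_zero hn
    · by_contra hc
      exact hn (mem_Vphi_coeff_pos hx (by omega))

lemma eq_sum_single (x : LaurentSeries ℂ) (h : x.support.Finite) :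
    x = ∑ n ∈ h.toFinset, HahnSeries.single n (x.coeff n) := by
  ext m
  have hs : (∑ n ∈ h.toFinset, HahnSeries.single n (x.coeff n)).coeff m
      = ∑ n ∈ h.toFinset, (HahnSeries.single n (x.coeff n)).coeff m :=
    map_sum (HahnSeries.coeff.addMonoidHom m) _ _
  rw [hs]
  by_cases hm : m ∈ h.toFinset
  · rw [Finset.sum_eq_single_of_mem m hm
      (fun n _ hne => HahnSeries.coeff_single_of_ne (Ne.symm hne)),
      HahnSeries.coeff_single_same]
  · have h0 : x.coeff m = 0 := by
      by_contra hc
      exact hm (by simpa using hc)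
    rw [h0]
    apply (Finset.sum_eq_zero _).symm
    intro n hn
    rw [HahnSeries.coeff_single_of_ne]
    intro hc; rw [hc] at hm; exact hm hn

lemma single_eq_smul (n : ℤ) (c : ℂ) :
    HahnSeries.single n c = c • HahnSeries.single n (1 : ℂ) := by
  ext m
  rw [HahnSeries.coeff_smul, HahnSeries.coeff_single, HahnSeries.coeff_single]
  split_ifs <;> simp

lemma single_mul_coeff (b : ℤ) (x : LaurentSeries ℂ) (n : ℤ) :
    (HahnSeries.single b (1 : ℂ) * x).coeff n = x.coeff (n - b) := by
  have h := HahnSeries.coeff_single_mul_add (r := (1 : ℂ)) (x := x) (a := n - b) (b := b)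
  rw [sub_add_cancel] at h
  rw [h, one_mul]

/-- The coefficient-extraction map `x ↦ (x.coeff 0, x.coeff (-1), …, x.coeff (-(k-1)))`. -/
def psi (k : ℕ) : LaurentSeries ℂ →ₗ[ℂ] (Fin k → ℂ) where
  toFun x := fun j => x.coeff (-(j : ℤ))
  map_add' x y := by ext j; simp [HahnSeries.coeff_add]
  map_smul' c x := by ext j; simp [HahnSeries.coeff_smul]


/-- Corollary 5.2: for polynomials `f_i, g_i` with
`f_i(0) ≠ 0`, `deg g_i < deg f_i` and `g_1/f_1, …, g_k/f_k` linearly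
independent, the span of `z^{-(k-1)} g_i(z)/f_i(z)` (`1 ≤ i ≤ k`) together with
`z^{-i}` (`i ≥ k`) is a point of the Sato Grassmannian. -/
theorem rational_frame_mem_UGM (k : ℕ) (hk : 1 ≤ k)
    (f g : Fin k → Polynomial ℂ)
    (hf0 : ∀ i, (f i).eval 0 ≠ 0)
    (hdeg : ∀ i, (g i).degree < (f i).degree)
    (hli : LinearIndependent ℂ fun i => polyToL (g i) / polyToL (f i)) :
    Submodule.span ℂ
      ((Set.range fun i : Fin k =>
          zL ^ (-((k : ℤ) - 1)) * (polyToL (g i) / polyToL (f i))) ∪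
        {h | ∃ l : ℕ, k ≤ l ∧ h = zL ^ (-(l : ℤ))}) ∈ UGM := by
  classical
  set q : Fin k → LaurentSeries ℂ := fun i => polyToL (g i) / polyToL (f i) with hq
  set w : Fin k → LaurentSeries ℂ := fun i => zL ^ (-((k : ℤ) - 1)) * q i with hw
  set S2 : Set (LaurentSeries ℂ) := {h | ∃ l : ℕ, k ≤ l ∧ h = zL ^ (-(l : ℤ))} with hS2
  set U : Submodule ℂ (LaurentSeries ℂ) := Submodule.span ℂ (Set.range w ∪ S2) with hU
  -- basic coefficient facts
  have hqcoeff : ∀ i n, n < 0 → (q i).coeff n = 0 := fun i n hn =>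
    div_coeff_neg (f i) (g i) (hf0 i) n hn
  have hwcoeff : ∀ i n, n < -((k : ℤ) - 1) → (w i).coeff n = 0 := by
    intro i n hn
    rw [hw]
    simp only []
    rw [zL_zpow, single_mul_coeff]
    exact hqcoeff i _ (by omega)
  -- the linear combination map
  set α : (Fin k → ℂ) →ₗ[ℂ] LaurentSeries ℂ := Fintype.linearCombination ℂ w with hα
  have hαapp : ∀ c, α c = ∑ i, c i • w i := fun c => rfl
  have coeff_sum : ∀ (F : Fin k → LaurentSeries ℂ) (n : ℤ),
      (∑ i, F i).coeff n = ∑ i, (F i).coeff n :=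
    fun F n => map_sum (HahnSeries.coeff.addMonoidHom n) _ _
  have hαcoeff : ∀ c n, n < -((k : ℤ) - 1) → (α c).coeff n = 0 := by
    intro c n hn
    rw [hαapp, coeff_sum]
    apply Finset.sum_eq_zero
    intro i _
    rw [HahnSeries.coeff_smul, hwcoeff i n hn, smul_zero]
  set β : (Fin k → ℂ) →ₗ[ℂ] LaurentSeries ℂ := trunc ∘ₗ α with hβ
  set γ : (Fin k → ℂ) →ₗ[ℂ] (Fin k → ℂ) := psi k ∘ₗ β with hγ
  have hβapp : ∀ c, β c = trunc (α c) := fun c => rfl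
  have hγapp : ∀ c j, γ c j = (β c).coeff (-(j : ℤ)) := fun c j => rfl
  have hβcoeff : ∀ c n, (β c).coeff n ≠ 0 → -((k : ℤ) - 1) ≤ n ∧ n ≤ 0 := by
    intro c n h
    rw [hβapp, trunc_coeff] at h
    by_cases hn : n ≤ 0
    · rw [if_pos hn] at h
      refine ⟨?_, hn⟩
      by_contra hc
      exact h (hαcoeff c n (by omega))
    · rw [if_neg hn] at h; exact absurd rfl h
  have hkerγβ : LinearMap.ker γ = LinearMap.ker β := by
    apply le_antisymm
    · intro c hc
      rw [LinearMap.mem_ker] at hc ⊢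
      ext n
      rw [HahnSeries.coeff_zero]
      by_contra h
      obtain ⟨h1, h2⟩ := hβcoeff c n h
      have hj : (-n).toNat < k := by omega
      have hn : -((⟨(-n).toNat, hj⟩ : Fin k) : ℤ) = n := by
        simp only [Fin.val_mk]
        omega
      have := congrFun hc (⟨(-n).toNat, hj⟩ : Fin k)
      rw [hγapp, hn] at this
      exact h this
    · intro c hc
      rw [LinearMap.mem_ker] at hc ⊢
      rw [hγ, LinearMap.comp_apply, hc, map_zero]
  -- the subspace spanned by z^{-l}, l ≥ k
  set Z : Submodule ℂ (LaurentSeries ℂ) := Submodule.span ℂ S2 with hZ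
  have hS2coeff : ∀ x ∈ S2, ∀ n : ℤ, -(k : ℤ) < n → x.coeff n = 0 := by
    rintro x ⟨l, hl, rfl⟩ n hn
    rw [zL_zpow, HahnSeries.coeff_single_of_ne]
    omega
  have hZcoeff : ∀ x ∈ Z, ∀ n : ℤ, -(k : ℤ) < n → x.coeff n = 0 := by
    intro x hx
    have : Z ≤ ⨅ n ∈ {n : ℤ | -(k : ℤ) < n}, LinearMap.ker (HahnSeries.coeff.linearMap n) := by
      rw [hZ, Submodule.span_le]
      intro y hy
      simp only [SetLike.mem_coe, Submodule.mem_iInf, LinearMap.mem_ker, Set.mem_setOf_eq]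
      intro n hn
      exact hS2coeff y hy n hn
    have hx' := this hx
    simp only [Submodule.mem_iInf, LinearMap.mem_ker, Set.mem_setOf_eq] at hx'
    exact fun n hn => hx' n hn
  have htruncS2 : ∀ x ∈ S2, trunc x = x := by
    rintro x ⟨l, hl, rfl⟩
    apply trunc_eq_self
    intro n hn
    rw [zL_zpow, HahnSeries.coeff_single_of_ne]
    omega
  have hZfix : ∀ x ∈ Z, trunc x = x := by
    intro x hx
    have : Z ≤ LinearMap.ker (trunc - LinearMap.id) := by
      rw [hZ, Submodule.span_le]
      intro y hy
      simp only [SetLike.mem_coe, LinearMap.mem_ker, LinearMap.sub_apply, LinearMap.id_apply,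
        sub_eq_zero]
      exact htruncS2 y hy
    have hx' := this hx
    simp only [LinearMap.mem_ker, LinearMap.sub_apply, LinearMap.id_apply, sub_eq_zero] at hx'
    exact hx'
  have hZU : Z ≤ U := by
    rw [hZ, hU]
    exact Submodule.span_mono Set.subset_union_right
  have hrangeα : LinearMap.range α = Submodule.span ℂ (Set.range w) :=
    Fintype.range_linearCombination ℂ w
  have hαU : ∀ c, α c ∈ U := by
    intro c
    have : α c ∈ LinearMap.range α := ⟨c, rfl⟩
    rw [hrangeα] at this
    exact Submodule.span_mono Set.subset_union_left this
  have hUdecomp : ∀ u ∈ U, ∃ c z, z ∈ Z ∧ u = α c + z := by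
    intro u hu
    rw [hU, Submodule.span_union, Submodule.mem_sup] at hu
    obtain ⟨y, hy, z, hz, rfl⟩ := hu
    rw [← hrangeα] at hy
    obtain ⟨c, rfl⟩ := hy
    exact ⟨c, z, hz, rfl⟩
  -- injectivity of α
  have hzpow_ne : zL ^ (-((k : ℤ) - 1)) ≠ 0 := by
    rw [zL_zpow]
    exact HahnSeries.single_ne_zero one_ne_zero
  have hα0 : ∀ c, α c = 0 → c = 0 := by
    intro c hc
    have h1 : zL ^ (-((k : ℤ) - 1)) * (∑ i, c i • q i) = 0 := by
      rw [Finset.mul_sum]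
      rw [hαapp] at hc
      rw [← hc]
      apply Finset.sum_congr rfl
      intro i _
      rw [hw]
      simp only []
      rw [← HahnSeries.C_mul_eq_smul, ← HahnSeries.C_mul_eq_smul, mul_left_comm]
    have h2 : (∑ i, c i • q i) = 0 := by
      rcases mul_eq_zero.mp h1 with h | h
      · exact absurd h hzpow_ne
      · exact h
    have := Fintype.linearIndependent_iff.mp hli c h2
    ext i
    exact this i
  -- description of trunc on U
  have htruncU : ∀ (c : Fin k → ℂ) (z : LaurentSeries ℂ), z ∈ Z →
      trunc (α c + z) = β c + z := by
    intro c z hz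
    rw [map_add, hZfix z hz, hβapp]
  -- ### the kernel
  set T := projU U with hT
  have hTapp : ∀ u : U, ((T u : Vphi) : LaurentSeries ℂ) = trunc (u : LaurentSeries ℂ) :=
    fun u => rfl
  have hTzero : ∀ u : U, T u = 0 ↔ trunc (u : LaurentSeries ℂ) = 0 := by
    intro u
    constructor
    · intro h
      have := congrArg (fun v : Vphi => (v : LaurentSeries ℂ)) h
      simpa [hTapp] using this
    · intro h
      apply Subtype.ext
      rw [hTapp, h]
      rfl
  -- the map from ker γ to ker T
  have hkermem : ∀ c : LinearMap.ker γ, (⟨α c, hαU c⟩ : U) ∈ {u : U | T u = 0} := by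
    intro c
    simp only [Set.mem_setOf_eq, hTzero]
    have hc : (c : Fin k → ℂ) ∈ LinearMap.ker β := by
      rw [← hkerγβ]; exact c.2
    exact LinearMap.mem_ker.mp hc
  set e1 : LinearMap.ker γ →ₗ[ℂ] LinearMap.ker T :=
    { toFun := fun c => ⟨⟨α c, hαU c⟩, by
        rw [LinearMap.mem_ker]
        exact hkermem c⟩
      map_add' := fun c c' => by
        apply Subtype.ext; apply Subtype.ext
        simp [map_add]
      map_smul' := fun r c => by
        apply Subtype.ext; apply Subtype.ext
        simp [map_smul] } with he1
  have he1inj : Function.Injective e1 := by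
    intro c c' h
    have h1 : α c = α c' := by
      have := congrArg (fun u : LinearMap.ker T => ((u : U) : LaurentSeries ℂ)) h
      simpa [he1] using this
    have : α ((c : Fin k → ℂ) - c') = 0 := by rw [map_sub, h1, sub_self]
    have := hα0 _ this
    apply Subtype.ext
    have := sub_eq_zero.mp this
    exact this
  have he1surj : Function.Surjective e1 := by
    rintro ⟨⟨u, hu⟩, hker⟩
    rw [LinearMap.mem_ker, hTzero] at hker
    obtain ⟨c, z, hz, rfl⟩ := hUdecomp u hu
    rw [htruncU c z hz] at hker
    -- show β c = 0 and z = 0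
    have hβc : β c = 0 := by
      ext n
      rw [HahnSeries.coeff_zero]
      by_cases hn : -(k : ℤ) < n
      · have hzn : z.coeff n = 0 := hZcoeff z hz n hn
        have := congrArg (fun x : LaurentSeries ℂ => x.coeff n) hker
        simpa [HahnSeries.coeff_add, hzn] using this
      · by_contra h
        obtain ⟨h1, h2⟩ := hβcoeff c n h
        omega
    have hzz : z = 0 := by
      rw [hβc, zero_add] at hker
      exact hker
    refine ⟨⟨c, ?_⟩, ?_⟩
    · rw [hkerγβ, LinearMap.mem_ker]
      exact hβc
    · apply Subtype.ext; apply Subtype.ext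
      show α c = α c + z
      rw [hzz, add_zero]
  have hkerequiv : Nonempty (LinearMap.ker γ ≃ₗ[ℂ] LinearMap.ker T) :=
    ⟨LinearEquiv.ofBijective e1 ⟨he1inj, he1surj⟩⟩
  obtain ⟨eker⟩ := hkerequiv
  -- ### the cokernel
  set M : Submodule ℂ (Fin k → ℂ) := LinearMap.range γ with hM
  set ψV : Vphi →ₗ[ℂ] (Fin k → ℂ) := psi k ∘ₗ Vphi.subtype with hψV
  set qmap : Vphi →ₗ[ℂ] (Fin k → ℂ) ⧸ M := M.mkQ ∘ₗ ψV with hqmap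
  have hψVsurj : Function.Surjective ψV := by
    intro v
    set x : LaurentSeries ℂ := ∑ j : Fin k, HahnSeries.single (-(j : ℤ)) (v j) with hx
    have hxV : x ∈ Vphi := by
      rw [mem_Vphi_iff]
      apply trunc_eq_self
      intro n hn
      rw [hx, coeff_sum]
      apply Finset.sum_eq_zero
      intro j _
      rw [HahnSeries.coeff_single_of_ne]
      omega
    refine ⟨⟨x, hxV⟩, ?_⟩
    ext j
    show x.coeff (-(j : ℤ)) = v j
    rw [hx, coeff_sum, Finset.sum_eq_single_of_mem j (Finset.mem_univ j)]
    · rw [HahnSeries.coeff_single_same]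
    · intro j' _ hne
      rw [HahnSeries.coeff_single_of_ne]
      intro hc
      apply hne
      apply Fin.ext
      omega
  have hqsurj : Function.Surjective qmap := by
    intro y
    obtain ⟨v, rfl⟩ := M.mkQ_surjective y
    obtain ⟨x, hx⟩ := hψVsurj v
    exact ⟨x, by rw [hqmap, LinearMap.comp_apply, hx]⟩
  have hψZ : ∀ z ∈ Z, psi k z = 0 := by
    intro z hz
    ext j
    show z.coeff (-(j : ℤ)) = 0
    apply hZcoeff z hz
    have : (j : ℤ) < (k : ℤ) := by exact_mod_cast j.2
    omega
  have hψβ : ∀ c, psi k (β c) = γ c := fun c => rfl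
  have hβVphi : ∀ c, β c ∈ Vphi := fun c => ⟨α c, rfl⟩
  have hkerq : LinearMap.ker qmap = LinearMap.range T := by
    apply le_antisymm
    · -- ker qmap ≤ range T
      rintro ⟨x, hxV⟩ hx
      rw [LinearMap.mem_ker, hqmap, LinearMap.comp_apply, ← LinearMap.mem_ker,
        Submodule.ker_mkQ] at hx
      obtain ⟨c, hc⟩ := hx
      -- d := x - β c
      set d : LaurentSeries ℂ := x - β c with hd
      have hdV : d ∈ Vphi := Submodule.sub_mem _ hxV (hβVphi c)
      have hdcoeff : ∀ n : ℤ, -(k : ℤ) < n → d.coeff n = 0 := by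
        intro n hn
        by_cases hn0 : 0 < n
        · rw [hd, HahnSeries.coeff_sub, mem_Vphi_coeff_pos hxV hn0,
            mem_Vphi_coeff_pos (hβVphi c) hn0, sub_zero]
        · have hj : (-n).toNat < k := by omega
          have hψd : (psi k d) ⟨(-n).toNat, hj⟩ = 0 := by
            have : psi k d = ψV ⟨x, hxV⟩ - γ c := by
              rw [hd, map_sub, hψβ]
              rfl
            rw [this, hc]
            simp
          have hn' : -(((⟨(-n).toNat, hj⟩ : Fin k) : ℕ) : ℤ) = n := by
            simp only [Fin.val_mk]
            omega
          rw [← hn']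
          exact hψd
      have hdZ : d ∈ Z := by
        have hfin := support_finite_of_mem_Vphi hdV
        rw [eq_sum_single d hfin]
        apply Submodule.sum_mem
        intro n hn
        rw [single_eq_smul]
        apply Submodule.smul_mem
        have hns : n ∈ d.support := by simpa using hn
        have hnk : n ≤ -(k : ℤ) := by
          by_contra hc'
          exact hns (hdcoeff n (by omega))
        apply Submodule.subset_span
        refine ⟨(-n).toNat, by omega, ?_⟩
        rw [zL_zpow]
        have htn : -((((-n).toNat) : ℕ) : ℤ) = n := by omega
        rw [htn]
      refine ⟨⟨α c + d, Submodule.add_mem _ (hαU c) (hZU hdZ)⟩, ?_⟩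
      apply Subtype.ext
      rw [hTapp]
      show trunc (α c + d) = x
      rw [htruncU c d hdZ, hd]
      ring
    · -- range T ≤ ker qmap
      rintro y ⟨u, rfl⟩
      rw [LinearMap.mem_ker, hqmap, LinearMap.comp_apply, ← LinearMap.mem_ker,
        Submodule.ker_mkQ]
      obtain ⟨c, z, hz, huval⟩ := hUdecomp (u : LaurentSeries ℂ) u.2
      refine ⟨c, ?_⟩
      have : ψV (T u) = psi k (trunc (u : LaurentSeries ℂ)) := rfl
      rw [this, huval, htruncU c z hz, map_add, hψβ, hψZ z hz, add_zero]
  have hcokerequiv : Nonempty ((Vphi ⧸ LinearMap.range T) ≃ₗ[ℂ] ((Fin k → ℂ) ⧸ M)) :=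
    ⟨(Submodule.quotEquivOfEq _ _ hkerq.symm).trans (qmap.quotKerEquivOfSurjective hqsurj)⟩
  obtain ⟨ecoker⟩ := hcokerequiv
  -- ### conclusion
  have hfd1 : FiniteDimensional ℂ (LinearMap.ker T) :=
    Module.Finite.equiv eker
  have hfd2 : FiniteDimensional ℂ (Vphi ⧸ LinearMap.range T) :=
    Module.Finite.equiv ecoker.symm
  have hdim1 : Module.finrank ℂ (LinearMap.ker T) = Module.finrank ℂ (LinearMap.ker γ) :=
    eker.symm.finrank_eq
  have hdim2 : Module.finrank ℂ (Vphi ⧸ LinearMap.range T) =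
      Module.finrank ℂ ((Fin k → ℂ) ⧸ M) := ecoker.finrank_eq
  have hrn1 : Module.finrank ℂ ((Fin k → ℂ) ⧸ M) + Module.finrank ℂ M =
      Module.finrank ℂ (Fin k → ℂ) := Submodule.finrank_quotient_add_finrank M
  have hrn2 : Module.finrank ℂ (LinearMap.range γ) + Module.finrank ℂ (LinearMap.ker γ) =
      Module.finrank ℂ (Fin k → ℂ) := LinearMap.finrank_range_add_finrank_ker γ
  refine ⟨hfd1, hfd2, ?_⟩
  rw [hdim1, hdim2]
  have : Module.finrank ℂ M = Module.finrank ℂ (LinearMap.range γ) := rfl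
  omega

end
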